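/- Let F be a finite field, n a natural number, x : Fin n → F a fixed vector, and q ∈ [0,1] a real number. On a probability space, let (H_v)_{v ∈ Fin n} and (G_v)_{v ∈ Fin n} be 2n random variables, all mutually independent as one family, such that for each v: H_v takes values in {0,1} ⊆ F (where 0 and 1 are the additive and multiplicative identities of F) with ℙ(H_v = 0) = q, and G_v is uniformly distributed on F. Set S = Σ_{v} x_v · H_v · G_v (computed in F) and let d = |{v : x_v ≠ 0}|. Then ℙ(S ≠ 0) = (1 − q^d) · (1 − 1/|F|). -/

import Mathlib

open MeasureTheory ProbabilityTheory
open scoped ENNReal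

/-- Single-entry characterization of the F-PCSA memory state: with
`S = ∑ v, x v * H v * G v`, where the `H v` are `{0,1}`-valued with
`ℙ(H v = 0) = q`, the `G v` are uniform on the finite field `F`, and all
`2n` variables are mutually independent, one has
`ℙ(S ≠ 0) = (1 − q^d) (1 − |F|⁻¹)` where `d = |{v : x v ≠ 0}|`. -/
theorem stmt_3 (F : Type*) [Field F] [Fintype F] [DecidableEq F]
    [MeasurableSpace F] [MeasurableSingletonClass F]
    (n : ℕ) (x : Fin n → F) (q : ℝ) (hq0 : 0 ≤ q) (hq1 : q ≤ 1)
    (Ω : Type*) [MeasurableSpace Ω] (μ : Measure Ω) [IsProbabilityMeasure μ]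
    (H G : Fin n → Ω → F)
    (hmeasH : ∀ v, Measurable (H v)) (hmeasG : ∀ v, Measurable (G v))
    (hindep : iIndepFun (β := fun _ : Fin n ⊕ Fin n => F)
      (Sum.elim H G) μ)
    (hH01 : ∀ v ω, H v ω = 0 ∨ H v ω = 1)
    (hHq : ∀ v, μ {ω | H v ω = 0} = ENNReal.ofReal q)
    (hGunif : ∀ v b, μ {ω | G v ω = b} = (Fintype.card F : ℝ≥0∞)⁻¹) :
    μ {ω | (∑ v, x v * H v ω * G v ω) ≠ 0}
      = ENNReal.ofReal
          ((1 - q ^ (Finset.univ.filter (fun v => x v ≠ 0)).card)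
            * (1 - 1 / (Fintype.card F : ℝ))) := by
  classical
  -- notation
  set T : Finset (Fin n) := Finset.univ.filter (fun v => x v ≠ 0) with hT
  set K : Ω → Finset (Fin n) := fun ω => T.filter (fun v => H v ω ≠ 0) with hK
  set c : ℝ≥0∞ := (Fintype.card F : ℝ≥0∞) with hc
  -- every subset of F is measurable
  have measF : ∀ s : Set F, MeasurableSet s := fun s => s.to_countable.measurableSet
  have hmall : ∀ i, Measurable (Sum.elim H G i) := by
    rintro (v | v)
    · exact hmeasH v
    · exact hmeasG v
  -- measurability of finite sums valued in F
  have hms : ∀ (A : Finset (Fin n)) (f : Fin n → Ω → F), (∀ v, Measurable (f v)) →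
      Measurable (fun ω => ∑ v ∈ A, f v ω) := by
    intro A f hf
    induction A using Finset.induction with
    | empty => simp only [Finset.sum_empty]; exact measurable_const
    | insert a s h ih =>
      simp only [Finset.sum_insert h]
      exact (measurable_of_finite (fun p : F × F => p.1 + p.2)).comp ((hf _).prodMk ih)
  have hmsG : ∀ (A : Finset (Fin n)), Measurable (fun ω => ∑ v ∈ A, x v * G v ω) := by
    intro A
    exact hms A _ (fun v => (measurable_of_finite (fun e : F => x v * e)).comp (hmeasG v))
  have hmeasS : MeasurableSet {ω | (∑ v, x v * H v ω * G v ω) ≠ 0} := by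
    have hm : Measurable (fun ω => ∑ v, x v * H v ω * G v ω) := by
      refine hms Finset.univ _ (fun v => ?_)
      exact (measurable_of_finite (fun p : F × F => x v * p.1 * p.2)).comp
        ((hmeasH v).prodMk (hmeasG v))
    exact hm ((measurableSet_singleton (0 : F)).compl)
  -- measurability of the events {K = A}
  have hmeasK : ∀ A : Finset (Fin n), MeasurableSet {ω | K ω = A} := by
    intro A
    have : {ω | K ω = A} = ⋂ v : Fin n, (H v) ⁻¹' {e : F | (v ∈ T ∧ e ≠ 0) ↔ v ∈ A} := by
      ext ω
      simp only [hK, Set.mem_setOf_eq, Set.mem_iInter, Set.mem_preimage, Finset.ext_iff,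
        Finset.mem_filter]
    rw [this]
    exact MeasurableSet.iInter (fun v => hmeasH v (measF _))
  -- the events {K = A}, A ⊆ T, partition Ω
  have hpart : ∀ s : Set Ω, MeasurableSet s →
      μ s = ∑ A ∈ T.powerset, μ (s ∩ {ω | K ω = A}) := by
    intro s hs
    have hu : s = ⋃ A ∈ (T.powerset : Finset (Finset (Fin n))), (s ∩ {ω | K ω = A}) := by
      ext ω
      simp only [Set.mem_iUnion, Set.mem_inter_iff, Set.mem_setOf_eq]
      constructor
      · intro hω
        exact ⟨K ω, Finset.mem_powerset.2 (Finset.filter_subset _ _), hω, rfl⟩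
      · rintro ⟨A, -, hω, -⟩
        exact hω
    have hdis : (↑(T.powerset) : Set (Finset (Fin n))).PairwiseDisjoint
        (fun A => s ∩ {ω | K ω = A}) := by
      intro A hA B hB hAB
      refine Set.disjoint_left.2 ?_
      rintro ω ⟨-, h1⟩ ⟨-, h2⟩
      exact hAB (h1 ▸ h2 ▸ rfl)
    conv_lhs => rw [hu]
    exact measure_biUnion_finset hdis (fun A _ => hs.inter (hmeasK A))
  -- on {K = A}, the sum S reduces to ∑ v ∈ A, x v * G v
  have hKpattern : ∀ A : Finset (Fin n), ∀ ω : Ω, K ω = A →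
      (∑ v, x v * H v ω * G v ω) = ∑ v ∈ A, x v * G v ω := by
    intro A ω hω
    have hAT : A ⊆ T := hω ▸ Finset.filter_subset _ _
    have h1 : (∑ v, x v * H v ω * G v ω) = ∑ v ∈ T, x v * H v ω * G v ω := by
      refine (Finset.sum_subset (Finset.subset_univ T) ?_).symm
      intro v _ hv
      have : x v = 0 := by
        by_contra hxv
        exact hv (by simp [hT, hxv])
      simp [this]
    have h2 : (∑ v ∈ T, x v * H v ω * G v ω) = ∑ v ∈ A, x v * H v ω * G v ω := by
      refine (Finset.sum_subset hAT ?_).symm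
      intro v hvT hvA
      have : H v ω = 0 := by
        by_contra hHv
        exact hvA (hω ▸ Finset.mem_filter.2 ⟨hvT, hHv⟩)
      simp [this]
    rw [h1, h2]
    refine Finset.sum_congr rfl (fun v hv => ?_)
    have hHv : H v ω ≠ 0 := (Finset.mem_filter.1 (hω ▸ hv : v ∈ K ω)).2
    rcases hH01 v ω with h | h
    · exact absurd h hHv
    · rw [h, mul_one]
  -- independence of G a from sums of other G's
  have hindepGa : ∀ (a : Fin n) (A : Finset (Fin n)), a ∉ A →
      IndepFun (G a) (fun ω => ∑ v ∈ A, x v * G v ω) μ := by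
    intro a A ha
    set S1 : Finset (Fin n ⊕ Fin n) := {Sum.inr a} with hS1
    set S2 : Finset (Fin n ⊕ Fin n) := A.image Sum.inr with hS2
    have hdisj : Disjoint S1 S2 := by
      simp only [hS1, hS2, Finset.disjoint_left, Finset.mem_singleton, Finset.mem_image]
      rintro i rfl ⟨v, hv, hvi⟩
      exact ha ((Sum.inr_injective hvi) ▸ hv)
    have base := hindep.indepFun_finset S1 S2 hdisj hmall
    have ha1 : Sum.inr a ∈ S1 := by simp [hS1]
    set g1 : (S1 → F) → F := fun t => t ⟨Sum.inr a, ha1⟩ with hg1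
    set g2 : (S2 → F) → F :=
      fun t => ∑ v ∈ A.attach, x v.1 * t ⟨Sum.inr v.1, by simp [hS2, v.2]⟩ with hg2
    have key := base.comp (φ := g1) (ψ := g2) (measurable_of_finite g1) (measurable_of_finite g2)
    have e2 : (g2 ∘ fun ω (i : S2) => Sum.elim H G i.1 ω)
        = fun ω => ∑ v ∈ A, x v * G v ω := by
      funext ω
      exact Finset.sum_attach A (fun v => x v * G v ω)
    rw [e2] at key
    exact key
  -- a nonzero linear combination of the uniform G's is uniform
  have hGsum : ∀ (A : Finset (Fin n)), (∀ v ∈ A, x v ≠ 0) → A.Nonempty → ∀ b : F,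
      μ {ω | ∑ v ∈ A, x v * G v ω = b} = c⁻¹ := by
    intro A hx hA b
    obtain ⟨a, ha⟩ := hA
    have hxa : x a ≠ 0 := hx a ha
    set R : Ω → F := fun ω => ∑ v ∈ A.erase a, x v * G v ω with hR
    have hsplit : ∀ ω, (∑ v ∈ A, x v * G v ω) = x a * G a ω + R ω := by
      intro ω; rw [hR]; exact (Finset.add_sum_erase A (fun v => x v * G v ω) ha).symm
    have hset : {ω | ∑ v ∈ A, x v * G v ω = b}
        = ⋃ r : F, (G a ⁻¹' {(x a)⁻¹ * (b - r)} ∩ R ⁻¹' {r}) := by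
      ext ω
      simp only [Set.mem_setOf_eq, Set.mem_iUnion, Set.mem_inter_iff, Set.mem_preimage,
        Set.mem_singleton_iff, hsplit ω]
      constructor
      · intro h
        refine ⟨R ω, ?_, rfl⟩
        field_simp
        linear_combination h
      · rintro ⟨r, h1, h2⟩
        rw [h1, h2]
        field_simp
        ring
    have hindepR := hindepGa a (A.erase a) (Finset.notMem_erase a A)
    have hdisj : Pairwise (Function.onFun Disjoint
        (fun r : F => G a ⁻¹' {(x a)⁻¹ * (b - r)} ∩ R ⁻¹' {r})) := by
      intro r s hrs
      refine Set.disjoint_left.2 ?_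
      rintro ω ⟨-, h1⟩ ⟨-, h2⟩
      exact hrs (h1.symm.trans h2)
    have hmeasR : Measurable R := hmsG _
    have hmeas : ∀ r : F, MeasurableSet (G a ⁻¹' {(x a)⁻¹ * (b - r)} ∩ R ⁻¹' {r}) :=
      fun r => ((hmeasG a) (measurableSet_singleton _)).inter (hmeasR (measurableSet_singleton _))
    rw [hset, measure_iUnion hdisj hmeas]
    have hterm : ∀ r : F, μ (G a ⁻¹' {(x a)⁻¹ * (b - r)} ∩ R ⁻¹' {r})
        = c⁻¹ * μ (R ⁻¹' {r}) := by
      intro r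
      rw [(indepFun_iff_measure_inter_preimage_eq_mul.1 hindepR) {(x a)⁻¹ * (b - r)} {r}
        (measurableSet_singleton _) (measurableSet_singleton _)]
      congr 1
      exact hGunif a _
    simp only [hterm]
    rw [ENNReal.tsum_mul_left]
    have htot : ∑' r : F, μ (R ⁻¹' {r}) = 1 := by
      have hu : (⋃ r : F, R ⁻¹' {r}) = Set.univ := by
        ext ω; simp
      have hd : Pairwise (Function.onFun Disjoint (fun r : F => R ⁻¹' {r})) := by
        intro r s hrs
        refine Set.disjoint_left.2 ?_
        intro ω h1 h2
        exact hrs ((h1 : R ω = r).symm.trans h2)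
      have h := measure_iUnion (μ := μ) hd (fun r => hmeasR (measurableSet_singleton _))
      rw [hu, measure_univ] at h
      exact h.symm
    rw [htot, mul_one]
  -- probability of a nonzero value for the reduced sum
  have hGA : ∀ A : Finset (Fin n), A ∈ T.powerset → A.Nonempty →
      μ {ω | (∑ v ∈ A, x v * G v ω) ≠ 0} = 1 - c⁻¹ := by
    intro A hA hAne
    have hxA : ∀ v ∈ A, x v ≠ 0 := by
      intro v hv
      have := Finset.mem_powerset.1 hA hv
      exact (Finset.mem_filter.1 this).2
    have h0 := hGsum A hxA hAne 0
    have hmeas0 : MeasurableSet {ω | (∑ v ∈ A, x v * G v ω) = 0} :=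
      hmsG A (measurableSet_singleton 0)
    have : {ω | (∑ v ∈ A, x v * G v ω) ≠ 0} = {ω | (∑ v ∈ A, x v * G v ω) = 0}ᶜ := rfl
    rw [this, prob_compl_eq_one_sub hmeas0, h0]
  -- the H-events are independent of the G-events
  have hprodA : ∀ A : Finset (Fin n), A ∈ T.powerset →
      μ ({ω | (∑ v ∈ A, x v * G v ω) ≠ 0} ∩ {ω | K ω = A})
        = μ {ω | (∑ v ∈ A, x v * G v ω) ≠ 0} * μ {ω | K ω = A} := by
    intro A hA
    have hAT : A ⊆ T := Finset.mem_powerset.1 hA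
    set S1 : Finset (Fin n ⊕ Fin n) := A.image Sum.inr with hS1
    set S2 : Finset (Fin n ⊕ Fin n) := T.image Sum.inl with hS2
    have hdisj : Disjoint S1 S2 := by
      simp only [hS1, hS2, Finset.disjoint_left, Finset.mem_image]
      rintro i ⟨v, hv, hvi⟩ ⟨w, hw, hwi⟩
      rw [← hvi] at hwi
      exact Sum.inl_ne_inr hwi
    have base := hindep.indepFun_finset S1 S2 hdisj hmall
    set g1 : (S1 → F) → F :=
      fun t => ∑ v ∈ A.attach, x v.1 * t ⟨Sum.inr v.1, by simp [hS1, v.2]⟩ with hg1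
    have key := base.comp (φ := g1) (ψ := id) (measurable_of_finite g1) measurable_id
    have e1 : (g1 ∘ fun ω (i : S1) => Sum.elim H G i.1 ω)
        = fun ω => ∑ v ∈ A, x v * G v ω := by
      funext ω
      exact Finset.sum_attach A (fun v => x v * G v ω)
    rw [e1] at key
    set B : Set (S2 → F) :=
      {t | ∀ v ∈ T.attach, (t ⟨Sum.inl v.1, by simp [hS2, v.2]⟩ ≠ 0 ↔ v.1 ∈ A)} with hB
    have hpre : (fun ω (i : S2) => Sum.elim H G i.1 ω) ⁻¹' B = {ω | K ω = A} := by
      ext ω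
      simp only [Set.mem_preimage, hB, Set.mem_setOf_eq, Finset.mem_attach, true_implies,
        Subtype.forall, hK, Finset.ext_iff, Finset.mem_filter]
      constructor
      · intro h v
        constructor
        · rintro ⟨hvT, hv0⟩
          exact (h v hvT).1 hv0
        · intro hvA
          have hvT : v ∈ T := hAT hvA
          exact ⟨hvT, (h v hvT).2 hvA⟩
      · intro h v hvT
        constructor
        · intro hv0
          exact (h v).1 ⟨hvT, hv0⟩
        · intro hvA
          exact ((h v).2 hvA).2
    have hmul := (indepFun_iff_measure_inter_preimage_eq_mul.1 key) ({0}ᶜ : Set F) B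
      ((measurableSet_singleton 0).compl) ((Set.to_countable B).measurableSet)
    rw [Function.id_comp] at hmul
    rw [hpre] at hmul
    exact hmul
  -- probability that all (relevant) H's vanish
  have hKempty : μ {ω | K ω = ∅} = (ENNReal.ofReal q) ^ T.card := by
    have h := hindep.measure_inter_preimage_eq_mul (T.image Sum.inl)
      (sets := fun _ => ({0} : Set F)) (fun i _ => measurableSet_singleton 0)
    have hset : (⋂ i ∈ T.image Sum.inl, Sum.elim H G i ⁻¹' ({0} : Set F))
        = {ω | K ω = ∅} := by
      ext ω
      simp only [Set.mem_iInter, Set.mem_preimage, Set.mem_singleton_iff, Set.mem_setOf_eq,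
        Finset.mem_image, hK, Finset.filter_eq_empty_iff, not_not]
      constructor
      · intro h v hv
        exact h (Sum.inl v) ⟨v, hv, rfl⟩
      · rintro h i ⟨v, hv, rfl⟩
        exact h hv
    rw [hset] at h
    rw [h, Finset.prod_image (by intro a _ b _ hab; exact Sum.inl_injective hab)]
    have : ∀ v ∈ T, μ (Sum.elim H G (Sum.inl v) ⁻¹' ({0} : Set F)) = ENNReal.ofReal q := by
      intro v _
      exact hHq v
    rw [Finset.prod_congr rfl this, Finset.prod_const]
  -- assemble
  have hempty : (∅ : Finset (Fin n)) ∈ T.powerset := Finset.mem_powerset.2 (Finset.empty_subset T)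
  have step1 : μ {ω | (∑ v, x v * H v ω * G v ω) ≠ 0}
      = ∑ A ∈ T.powerset, (if A = ∅ then 0 else (1 - c⁻¹) * μ {ω | K ω = A}) := by
    rw [hpart _ hmeasS]
    refine Finset.sum_congr rfl (fun A hA => ?_)
    have hrestr : {ω | (∑ v, x v * H v ω * G v ω) ≠ 0} ∩ {ω | K ω = A}
        = {ω | (∑ v ∈ A, x v * G v ω) ≠ 0} ∩ {ω | K ω = A} := by
      ext ω
      simp only [Set.mem_inter_iff, Set.mem_setOf_eq]
      constructor
      · rintro ⟨h1, h2⟩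
        exact ⟨(hKpattern A ω h2) ▸ h1, h2⟩
      · rintro ⟨h1, h2⟩
        exact ⟨(hKpattern A ω h2) ▸ h1, h2⟩
    rw [hrestr]
    by_cases hAe : A = ∅
    · subst hAe
      simp
    · rw [if_neg hAe, hprodA A hA, hGA A hA (Finset.nonempty_iff_ne_empty.2 hAe)]
  have step2 : ∑ A ∈ T.powerset, (if A = ∅ then 0 else (1 - c⁻¹) * μ {ω | K ω = A})
      = (1 - c⁻¹) * ∑ A ∈ T.powerset.erase ∅, μ {ω | K ω = A} := by
    rw [Finset.mul_sum, ← Finset.sum_erase (a := ∅) T.powerset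
      (f := fun A => if A = ∅ then 0 else (1 - c⁻¹) * μ {ω | K ω = A}) (by simp)]
    refine Finset.sum_congr rfl (fun A hA => ?_)
    rw [if_neg (Finset.mem_erase.1 hA).1]
  have hsum1 : ∑ A ∈ T.powerset, μ {ω | K ω = A} = 1 := by
    have h := hpart Set.univ MeasurableSet.univ
    simp only [Set.univ_inter, measure_univ] at h
    exact h.symm
  have step3 : ∑ A ∈ T.powerset.erase ∅, μ {ω | K ω = A}
      = 1 - (ENNReal.ofReal q) ^ T.card := by
    have h : μ {ω | K ω = ∅} + ∑ A ∈ T.powerset.erase ∅, μ {ω | K ω = A} = 1 := by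
      rw [← hsum1]
      exact Finset.add_sum_erase T.powerset (fun A => μ {ω | K ω = A}) hempty
    rw [hKempty] at h
    refine ENNReal.eq_sub_of_add_eq (ENNReal.pow_ne_top ENNReal.ofReal_ne_top) ?_
    rw [add_comm]
    exact h
  rw [step1, step2, step3]
  -- final arithmetic
  have hcard : (0 : ℝ) < (Fintype.card F : ℝ) := by
    exact_mod_cast Fintype.card_pos
  have hqd : q ^ T.card ≤ 1 := pow_le_one₀ hq0 hq1
  rw [ENNReal.ofReal_mul (by linarith)]
  have e1 : ENNReal.ofReal (1 - q ^ T.card) = 1 - (ENNReal.ofReal q) ^ T.card := by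
    rw [ENNReal.ofReal_sub _ (by positivity), ENNReal.ofReal_one, ENNReal.ofReal_pow hq0]
  have e2 : ENNReal.ofReal (1 - 1 / (Fintype.card F : ℝ)) = 1 - c⁻¹ := by
    rw [ENNReal.ofReal_sub _ (by positivity), ENNReal.ofReal_one, one_div,
      ENNReal.ofReal_inv_of_pos hcard, ENNReal.ofReal_natCast]
  rw [e1, e2, mul_comm]
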